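/- If additionally [A₁, A₂] = 0 (Alice's first two observables are compatible, realized projectively), then the CHSH operator S = A₁B₁ + A₁B₂ + A₂B₁ − A₂B₂ satisfies ‖S‖ ≤ 2, i.e., the local bound: for commuting self-adjoint involutions A₁, A₂ (also commuting with B₁, B₂), ⟨ψ|S|ψ⟩ ≤ 2 for all unit vectors ψ. -/

import Mathlib

/-- Swap lemma: if `B` commutes with `A'`, then `(A*B)*(A'*B') = (A*A')*(B*B')`. -/
lemma chsh_swap {R : Type*} [Ring R] (A B A' B' : R) (h : B * A' = A' * B) :
    (A * B) * (A' * B') = (A * A') * (B * B') := by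
  rw [mul_assoc, ← mul_assoc B, h, mul_assoc, ← mul_assoc, ← mul_assoc]

/-- In any ring, the CHSH operator squares to `4` when Alice's observables commute. -/
lemma chsh_sq {R : Type*} [Ring R] (A₁ A₂ B₁ B₂ : R)
    (hA₁sq : A₁ * A₁ = 1) (hA₂sq : A₂ * A₂ = 1)
    (hB₁sq : B₁ * B₁ = 1) (hB₂sq : B₂ * B₂ = 1)
    (hc₁₁ : A₁ * B₁ = B₁ * A₁) (hc₁₂ : A₁ * B₂ = B₂ * A₁)
    (hc₂₁ : A₂ * B₁ = B₁ * A₂) (hc₂₂ : A₂ * B₂ = B₂ * A₂)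
    (hAA : A₁ * A₂ = A₂ * A₁) :
    (A₁ * B₁ + A₁ * B₂ + A₂ * B₁ - A₂ * B₂) *
      (A₁ * B₁ + A₁ * B₂ + A₂ * B₁ - A₂ * B₂) = 4 := by
  have s11 : B₁ * A₁ = A₁ * B₁ := hc₁₁.symm
  have s12 : B₂ * A₁ = A₁ * B₂ := hc₁₂.symm
  have s21 : B₁ * A₂ = A₂ * B₁ := hc₂₁.symm
  have s22 : B₂ * A₂ = A₂ * B₂ := hc₂₂.symm
  have w11 : ∀ A B', (A * B₁) * (A₁ * B') = (A * A₁) * (B₁ * B') :=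
    fun A B' => chsh_swap A B₁ A₁ B' s11
  have w12 : ∀ A B', (A * B₂) * (A₁ * B') = (A * A₁) * (B₂ * B') :=
    fun A B' => chsh_swap A B₂ A₁ B' s12
  have w21 : ∀ A B', (A * B₁) * (A₂ * B') = (A * A₂) * (B₁ * B') :=
    fun A B' => chsh_swap A B₁ A₂ B' s21
  have w22 : ∀ A B', (A * B₂) * (A₂ * B') = (A * A₂) * (B₂ * B') :=
    fun A B' => chsh_swap A B₂ A₂ B' s22
  simp only [add_mul, mul_add, sub_mul, mul_sub]
  simp only [w11, w12, w21, w22]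
  rw [hA₁sq, hA₂sq, hB₁sq, hB₂sq, hAA]
  noncomm_ring
  simp

/-- The CHSH local bound: if additionally Alice's two observables commute,
then `⟨ψ|S|ψ⟩ ≤ 2` for the CHSH operator `S = A₁B₁ + A₁B₂ + A₂B₁ − A₂B₂`
and every unit vector `ψ`. -/
theorem chsh_local_bound_of_compatible_alice
    (H : Type*) [NormedAddCommGroup H] [InnerProductSpace ℂ H] [CompleteSpace H]
    (A₁ A₂ B₁ B₂ : H →L[ℂ] H)
    (hA₁ : IsSelfAdjoint A₁) (hA₂ : IsSelfAdjoint A₂)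
    (hB₁ : IsSelfAdjoint B₁) (hB₂ : IsSelfAdjoint B₂)
    (hA₁sq : A₁ * A₁ = 1) (hA₂sq : A₂ * A₂ = 1)
    (hB₁sq : B₁ * B₁ = 1) (hB₂sq : B₂ * B₂ = 1)
    (hc₁₁ : A₁ * B₁ = B₁ * A₁) (hc₁₂ : A₁ * B₂ = B₂ * A₁)
    (hc₂₁ : A₂ * B₁ = B₁ * A₂) (hc₂₂ : A₂ * B₂ = B₂ * A₂)
    (hAA : A₁ * A₂ = A₂ * A₁) :
    ∀ ψ : H, ‖ψ‖ = 1 →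
      (inner ℂ ψ ((A₁ * B₁ + A₁ * B₂ + A₂ * B₁ - A₂ * B₂) ψ) : ℂ).re ≤ 2 := by
  intro ψ hψ
  set S : H →L[ℂ] H := A₁ * B₁ + A₁ * B₂ + A₂ * B₁ - A₂ * B₂ with hS_def
  have hSsq : S * S = 4 :=
    chsh_sq A₁ A₂ B₁ B₂ hA₁sq hA₂sq hB₁sq hB₂sq hc₁₁ hc₁₂ hc₂₁ hc₂₂ hAA
  -- S is self-adjoint
  have hsaAB : ∀ (A B : H →L[ℂ] H), IsSelfAdjoint A → IsSelfAdjoint B →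
      A * B = B * A → star (A * B) = A * B := by
    intro A B hA hB hcomm
    rw [star_mul, hA.star_eq, hB.star_eq, hcomm]
  have hSsa : IsSelfAdjoint S := by
    show star S = S
    rw [hS_def]
    rw [star_sub, star_add, star_add,
      hsaAB A₁ B₁ hA₁ hB₁ hc₁₁, hsaAB A₁ B₂ hA₁ hB₂ hc₁₂,
      hsaAB A₂ B₁ hA₂ hB₁ hc₂₁, hsaAB A₂ B₂ hA₂ hB₂ hc₂₂]
  -- norm bound ‖S‖ ≤ 2
  have h4 : ‖(4 : H →L[ℂ] H)‖ ≤ 4 := by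
    have : (4 : H →L[ℂ] H) = (4 : ℂ) • 1 := by
      ext x; simp [← Nat.cast_smul_eq_nsmul ℂ]
    rw [this]
    calc ‖(4 : ℂ) • (1 : H →L[ℂ] H)‖ = ‖(4 : ℂ)‖ * ‖(1 : H →L[ℂ] H)‖ := norm_smul _ _
      _ ≤ 4 * 1 := by
          apply mul_le_mul (le_of_eq (by norm_num)) ContinuousLinearMap.norm_id_le
            (norm_nonneg _) (by norm_num)
      _ = 4 := by norm_num
  have hnormsq : ‖S‖ * ‖S‖ ≤ 4 := by
    calc ‖S‖ * ‖S‖ = ‖star S * S‖ := (CStarRing.norm_star_mul_self).symm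
      _ = ‖(4 : H →L[ℂ] H)‖ := by rw [hSsa.star_eq, hSsq]
      _ ≤ 4 := h4
  have hnorm : ‖S‖ ≤ 2 := by nlinarith [norm_nonneg S]
  -- conclude
  calc (inner ℂ ψ (S ψ) : ℂ).re ≤ ‖(inner ℂ ψ (S ψ) : ℂ)‖ := Complex.re_le_norm _
    _ ≤ ‖ψ‖ * ‖S ψ‖ := norm_inner_le_norm _ _
    _ ≤ ‖ψ‖ * (‖S‖ * ‖ψ‖) := by
        exact mul_le_mul_of_nonneg_left (S.le_opNorm ψ) (norm_nonneg _)
    _ = ‖S‖ := by rw [hψ]; ring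
    _ ≤ 2 := hnorm
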